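/- Let λ > 0. For every n ∈ ℕ: ∫_ℝ (W_λ h_{4n})(x) · h_{4n+4}(x) dx = (1/4)√((4n+1)(4n+2)(4n+3)(4n+4)), and ∫_ℝ (W_λ h_{4n})(x) · h_{4n}(x) dx = -8n² - 2n - 3/4 + 2π λ² (8n+1). (These are the off-diagonal and diagonal coefficients of the Jacobi matrix of the prolate operator restricted to the even eigenspace of the Fourier transform.) -/

import Mathlib

open MeasureTheory Finset

/-- The normalized even Hermite function `h_{2n}`. -/
noncomputable def h2 (n : ℕ) (x : ℝ) : ℝ :=
  ∑ k ∈ Finset.range (n + 1),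
    (-1 : ℝ) ^ (n - k) * (2 : ℝ) ^ ((3 * (k : ℝ)) - n + 1 / 4) *
      Real.sqrt ((2 * n).factorial) / ((2 * k).factorial * (n - k).factorial) *
      Real.pi ^ k * x ^ (2 * k) * Real.exp (-Real.pi * x ^ 2)

/-- The prolate wave operator `(W_λ ψ)(q) = -d/dq((λ²-q²)ψ'(q)) + (2πλq)² ψ(q)`. -/
noncomputable def W (lam : ℝ) (ψ : ℝ → ℝ) (q : ℝ) : ℝ :=
  -deriv (fun t => (lam ^ 2 - t ^ 2) * deriv ψ t) q + (2 * Real.pi * lam * q) ^ 2 * ψ q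

section Aux
open Polynomial Real
open scoped Nat

theorem hermite_deriv' (n : ℕ) : derivative (hermite n) = C (n : ℤ) * hermite (n - 1) := by
  induction n with
  | zero => simp
  | succ n ih =>
    rw [hermite_succ, derivative_sub, derivative_mul, derivative_X, one_mul, ih]
    cases n with
    | zero => simp [hermite_one]
    | succ k =>
      simp only [derivative_C_mul, Nat.add_sub_cancel]
      simp only [Nat.cast_add, Nat.cast_one, map_add, map_one]
      linear_combination (-(C (k:ℤ)) - 1) * (hermite_succ k)

noncomputable def Hr (m : ℕ) : Polynomial ℝ := (Polynomial.hermite m).map (algebraMap ℤ ℝ)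

theorem Hr_deriv (m : ℕ) : derivative (Hr m) = C (m:ℝ) * Hr (m-1) := by
  unfold Hr
  rw [derivative_map, hermite_deriv', Polynomial.map_mul, map_C]
  simp

theorem Hr_succ_raw (m : ℕ) : Hr (m+1) = X * Hr m - derivative (Hr m) := by
  unfold Hr
  rw [hermite_succ, Polynomial.map_sub, Polynomial.map_mul, map_X, derivative_map]

theorem Hr_X_mul (m : ℕ) : X * Hr m = Hr (m+1) + C (m:ℝ) * Hr (m-1) := by
  rw [Hr_succ_raw, Hr_deriv]; ring

/-- The (unnormalized) Hermite function in our scaling. -/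
noncomputable def fh (m : ℕ) (x : ℝ) : ℝ :=
  (Hr m).eval (2 * Real.sqrt π * x) * Real.exp (-π * x^2)

theorem x_mul_fh (m : ℕ) (x : ℝ) :
    2 * Real.sqrt π * x * fh m x = fh (m+1) x + (m:ℝ) * fh (m-1) x := by
  unfold fh
  have hx := congrArg (fun p => Polynomial.eval (2 * Real.sqrt π * x) p) (Hr_X_mul m)
  simp only [eval_mul, eval_add, eval_X, eval_C] at hx
  linear_combination (Real.exp (-π * x^2)) * hx

theorem hasDerivAt_fh (m : ℕ) (x : ℝ) :
    HasDerivAt (fh m) (Real.sqrt π * ((m:ℝ) * fh (m-1) x - fh (m+1) x)) x := by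
  have hlin : HasDerivAt (fun t : ℝ => 2 * Real.sqrt π * t) (2 * Real.sqrt π) x := by
    simpa using (hasDerivAt_id x).const_mul (2 * Real.sqrt π)
  have h1 : HasDerivAt (fun t : ℝ => (Hr m).eval (2 * Real.sqrt π * t))
      ((derivative (Hr m)).eval (2 * Real.sqrt π * x) * (2 * Real.sqrt π)) x :=
    (Polynomial.hasDerivAt (Hr m) _).comp x hlin
  have hq : HasDerivAt (fun t : ℝ => -π * t^2) (-π * (2*x)) x := by
    simpa using ((hasDerivAt_pow 2 x).const_mul (-π))
  have h := h1.mul hq.exp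
  refine h.congr_deriv (Eq.symm ?_)
  rw [Hr_deriv]
  have h0 : Real.sqrt π * Real.sqrt π = π := Real.mul_self_sqrt (le_of_lt Real.pi_pos)
  have hx := congrArg (fun p => Polynomial.eval (2 * Real.sqrt π * x) p) (Hr_X_mul m)
  simp only [eval_mul, eval_add, eval_X, eval_C] at hx
  unfold fh
  simp only [eval_mul, eval_C]
  linear_combination (Real.sqrt π * Real.exp (-π*x^2)) * hx +
    (-2*x*(Hr m).eval (2*Real.sqrt π*x)*Real.exp (-π*x^2)) * h0

theorem deriv_fh (m : ℕ) :
    deriv (fh m) = fun x => Real.sqrt π * ((m:ℝ) * fh (m-1) x - fh (m+1) x) :=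
  funext fun x => (hasDerivAt_fh m x).deriv

theorem hasDerivAt_fh2 (m : ℕ) (x : ℝ) :
    HasDerivAt (fun t => Real.sqrt π * ((m:ℝ) * fh (m-1) t - fh (m+1) t))
      (π * ((m:ℝ)*((m:ℝ)-1) * fh (m-2) x - (2*(m:ℝ)+1) * fh m x + fh (m+2) x)) x := by
  have h0 : Real.sqrt π * Real.sqrt π = π := Real.mul_self_sqrt (le_of_lt Real.pi_pos)
  have h := (((hasDerivAt_fh (m-1) x).const_mul (m:ℝ)).sub (hasDerivAt_fh (m+1) x)).const_mul
    (Real.sqrt π)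
  refine h.congr_deriv (Eq.symm ?_)
  cases m with
  | zero => push_cast; nth_rw 1 [← h0]; ring
  | succ k => push_cast [Nat.add_sub_cancel]; nth_rw 1 [← h0]; ring

theorem x2_mul_fh (m : ℕ) (x : ℝ) :
    4*π*x^2 * fh m x
      = fh (m+2) x + (2*(m:ℝ)+1) * fh m x + (m:ℝ)*((m:ℝ)-1) * fh (m-2) x := by
  have h0 : Real.sqrt π * Real.sqrt π = π := Real.mul_self_sqrt (le_of_lt Real.pi_pos)
  cases m with
  | zero =>
    have e0 := x_mul_fh 0 x
    have e1 := x_mul_fh 1 x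
    push_cast at e0 e1 ⊢
    linear_combination (2*Real.sqrt π*x) * e0 + e1 + (-4*x^2*fh 0 x) * h0
  | succ k =>
    have e0 := x_mul_fh k x
    have e1 := x_mul_fh (k+1) x
    have e2 := x_mul_fh (k+2) x
    simp only [Nat.add_sub_cancel] at e1 e2
    push_cast [Nat.add_sub_cancel] at e0 e1 e2 ⊢
    linear_combination (2*Real.sqrt π*x) * e1 + e2
      + ((k:ℝ)+1) * e0 + (-4*x^2*fh (k+1) x) * h0

/-- double factorial vs factorial -/
theorem fact_two_mul_ddf (m : ℕ) : (2*m).factorial = 2^m * m.factorial * (2*m-1)‼ := by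
  cases m with
  | zero => rfl
  | succ k =>
    have h1 : 2*(k+1) = (2*k+1)+1 := by ring
    rw [h1, Nat.factorial_eq_mul_doubleFactorial]
    rw [show (2*k+1)+1 = 2*(k+1) from by ring, Nat.doubleFactorial_two_mul]
    rw [show 2*(k+1)-1 = 2*k+1 from by omega]

theorem NID {n k : ℕ} (hk : k ≤ n) :
    2^(3*k) * (2*n).factorial
      = 2^(2*k) * 2^n * ((n-k).factorial *
          ((2*(n-k)-1)‼ * ((2*n).choose (2*k) * (2*k).factorial))) := by
  have h1 := Nat.choose_mul_factorial_mul_factorial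
    (show 2*k ≤ 2*n from by omega)
  rw [show 2*n - 2*k = 2*(n-k) from by omega] at h1
  have h3 := fact_two_mul_ddf (n-k)
  have h5 : (2:ℕ)^n = 2^k * 2^(n-k) := by rw [← pow_add]; congr 1; omega
  calc 2^(3*k) * (2*n).factorial
      = 2^(3*k) * ((2*n).choose (2*k) * (2*k).factorial * (2*(n-k)).factorial) := by rw [h1]
    _ = 2^(3*k) * ((2*n).choose (2*k) * (2*k).factorial *
          (2^(n-k) * (n-k).factorial * (2*(n-k)-1)‼)) := by rw [h3]
    _ = _ := by rw [h5]; ring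

end Aux

section Aux2
open Polynomial Real
open scoped Nat

noncomputable def cc (N : ℕ) : ℝ := (2:ℝ)^((1:ℝ)/4) / Real.sqrt ((2*N).factorial)

theorem h2_eq (N : ℕ) (x : ℝ) : h2 N x = cc N * fh (2*N) x := by
  have hfact : (0:ℝ) < ((2*N).factorial : ℝ) := by exact_mod_cast (2*N).factorial_pos
  have hS : Real.sqrt ((2*N).factorial) * Real.sqrt ((2*N).factorial)
      = ((2*N).factorial : ℝ) := Real.mul_self_sqrt (le_of_lt hfact)
  have hSpos : (0:ℝ) < Real.sqrt ((2*N).factorial) := Real.sqrt_pos.mpr hfact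
  have hdeg : (Hr (2*N)).natDegree = 2*N := by
    unfold Hr
    rw [Polynomial.natDegree_map_eq_of_injective ((algebraMap ℤ ℝ).injective_int)]
    exact Polynomial.natDegree_hermite
  unfold h2 cc fh
  rw [Polynomial.eval_eq_sum_range, hdeg]
  rw [Finset.sum_mul, Finset.mul_sum]
  rw [← Finset.sum_filter_of_ne
    (p := fun j => Even j) (f := fun j => (2:ℝ)^((1:ℝ)/4) / Real.sqrt ((2*N).factorial) *
      ((Hr (2*N)).coeff j * (2*Real.sqrt π*x)^j * Real.exp (-π * x^2)))
    ?_]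
  swap
  · intro j hj hne
    by_contra hodd
    apply hne
    have : (Hr (2*N)).coeff j = 0 := by
      unfold Hr
      rw [Polynomial.coeff_map]
      rw [Polynomial.coeff_hermite_of_odd_add
        ((Even.add_odd ⟨N, by ring⟩ (Nat.not_even_iff_odd.mp hodd)))]
      simp
    simp [this]
  · apply Finset.sum_nbij' (i := fun k => 2*k) (j := fun j => j/2)
    · intro a ha
      simp only [Finset.mem_filter, Finset.mem_range] at *
      constructor
      · omega
      · exact even_two_mul a
    · intro a ha
      simp only [Finset.mem_filter, Finset.mem_range] at ha
      rcases ha.2 with ⟨b, rfl⟩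
      simp only [Finset.mem_range]
      omega
    · intro a _; omega
    · intro a ha
      simp only [Finset.mem_filter, Finset.mem_range] at ha
      obtain ⟨b, rfl⟩ := ha.2
      omega
    · intro k hk
      simp only [Finset.mem_range] at hk
      have hkN : k ≤ N := by omega
      have hc : ((Hr (2*N)).coeff (2*k) : ℝ)
          = ((-1:ℝ))^(N-k) * ((2*(N-k)-1)‼ : ℝ) * ((2*N).choose (2*k) : ℝ) := by
        unfold Hr
        rw [Polynomial.coeff_map]
        have hcoeff := Polynomial.coeff_hermite_explicit (N-k) (2*k)
        rw [show 2*(N-k) + 2*k = 2*N from by omega] at hcoeff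
        rw [hcoeff]
        push_cast
        ring
      have hy : (2*Real.sqrt π*x)^(2*k) = 2^(2*k) * π^k * x^(2*k) := by
        rw [mul_pow, mul_pow, pow_mul (Real.sqrt π), Real.sq_sqrt (le_of_lt Real.pi_pos)]
      rw [hc, hy]
      have hrpow : (2:ℝ)^((3*(k:ℝ))-N+1/4) = 2^(3*k) * ((2:ℝ)^N)⁻¹ * 2^((1:ℝ)/4) := by
        rw [show (3*(k:ℝ))-N+1/4 = ((3*k : ℕ):ℝ) + (-(N:ℝ)) + 1/4 from by push_cast; ring]
        rw [Real.rpow_add two_pos, Real.rpow_add two_pos, Real.rpow_natCast,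
          Real.rpow_neg (le_of_lt two_pos), Real.rpow_natCast]
      rw [hrpow]
      have key : (2:ℝ)^(3*k) * ((2*N).factorial : ℝ)
          = 2^(2*k) * 2^N * (((N-k).factorial : ℝ) *
              (((2*(N-k)-1)‼ : ℝ) * (((2*N).choose (2*k) : ℝ) * ((2*k).factorial : ℝ)))) := by
        exact_mod_cast NID hkN
      have hf1 : (0:ℝ) < ((2*k).factorial : ℝ) := by exact_mod_cast (2*k).factorial_pos
      have hf2 : (0:ℝ) < ((N-k).factorial : ℝ) := by exact_mod_cast (N-k).factorial_pos
      have key2 : ((2:ℝ)^(3*k) * ((2:ℝ)^N)⁻¹ * Real.sqrt ((2*N).factorial))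
            / (((2*k).factorial : ℝ) * ((N-k).factorial : ℝ))
          = (((2*(N-k)-1)‼:ℝ) * (((2*N).choose (2*k)):ℝ) * 2^(2*k))
            / Real.sqrt ((2*N).factorial) := by
        rw [div_eq_div_iff (by positivity) (ne_of_gt hSpos)]
        field_simp
        linear_combination key + ((2:ℝ)^(3*k)) * hS
      linear_combination
        ((-1:ℝ))^(N-k) * (2:ℝ)^((1:ℝ)/4) * π^k * x^(2*k) * Real.exp (-π*x^2) * key2

/-! Orthogonality -/

noncomputable def gg (y : ℝ) : ℝ := Real.exp (-(1/2 : ℝ) * y^2)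

theorem integrable_poly_gauss (P : Polynomial ℝ) {b : ℝ} (hb : 0 < b) :
    Integrable fun x : ℝ => P.eval x * Real.exp (-b*x^2) := by
  have hmono : ∀ i : ℕ, Integrable (fun x : ℝ => x^i * Real.exp (-b*x^2)) := by
    intro i
    have h := integrable_rpow_mul_exp_neg_mul_sq hb (s := (i:ℝ))
      (lt_of_lt_of_le (by norm_num) (Nat.cast_nonneg i))
    have : (fun x : ℝ => x ^ ((i:ℕ):ℝ) * Real.exp (-b*x^2))
        = fun x : ℝ => x^i * Real.exp (-b*x^2) := by
      funext x; rw [Real.rpow_natCast]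
    rwa [this] at h
  have hrw : (fun x : ℝ => P.eval x * Real.exp (-b*x^2))
      = fun x => ∑ i ∈ Finset.range (P.natDegree+1),
          P.coeff i * (x^i * Real.exp (-b*x^2)) := by
    funext x
    rw [Polynomial.eval_eq_sum_range, Finset.sum_mul]
    simp [mul_assoc]
  rw [hrw]
  exact integrable_finset_sum _ (fun i _ => (hmono i).const_mul _)

theorem integrable_poly_gauss' (P : Polynomial ℝ) (c : ℝ) {b : ℝ} (hb : 0 < b) :
    Integrable fun x : ℝ => P.eval (c*x) * Real.exp (-b*x^2) := by
  have : (fun x : ℝ => P.eval (c*x) * Real.exp (-b*x^2))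
      = fun x => (P.comp (C c * X)).eval x * Real.exp (-b*x^2) := by
    funext x; rw [Polynomial.eval_comp]; simp
  rw [this]; exact integrable_poly_gauss _ hb

theorem hasDerivAt_Hgg (b : ℕ) (y : ℝ) :
    HasDerivAt (fun t => (Hr b).eval t * gg t) (-((Hr (b+1)).eval y * gg y)) y := by
  have h1 := Polynomial.hasDerivAt (Hr b) y
  have hq : HasDerivAt (fun t : ℝ => -(1/2:ℝ)*t^2) (-(1/2:ℝ)*(2*y)) y := by
    simpa using (hasDerivAt_pow 2 y).const_mul (-(1/2:ℝ))
  have h := h1.mul hq.exp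
  refine h.congr_deriv (Eq.symm ?_)
  rw [Hr_succ_raw]
  simp only [eval_sub, eval_mul, eval_X]
  unfold gg
  ring

theorem iter_deriv_Hr (m k : ℕ) :
    derivative^[k] (Hr m) = C ((m.descFactorial k : ℝ)) * Hr (m - k) := by
  induction k with
  | zero => simp
  | succ k ih =>
    rw [Function.iterate_succ_apply', ih, derivative_C_mul, Hr_deriv,
      Nat.descFactorial_succ, Nat.sub_sub]
    push_cast
    rw [C_mul]
    ring

theorem gauss_eq (y : ℝ) : Real.exp (-(1/2 : ℝ)*y^2) = gg y := rfl

theorem integrable_P_Hgg (P : Polynomial ℝ) (b : ℕ) :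
    Integrable (fun y : ℝ => P.eval y * ((Hr b).eval y * gg y)) := by
  have : (fun y : ℝ => P.eval y * ((Hr b).eval y * gg y))
      = fun y => (P * Hr b).eval y * Real.exp (-(1/2:ℝ)*y^2) := by
    funext y; simp [gg, mul_assoc]
  rw [this]; exact integrable_poly_gauss _ (by norm_num)

theorem ibp_hermite (b : ℕ) (P : Polynomial ℝ) :
    ∫ y : ℝ, P.eval y * ((Hr b).eval y * gg y)
      = ∫ y : ℝ, (derivative^[b] P).eval y * gg y := by
  induction b generalizing P with
  | zero =>
    simp only [Function.iterate_zero_apply]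
    congr 1; funext y
    have : Hr 0 = 1 := by unfold Hr; simp [Polynomial.hermite_zero]
    rw [this]; simp
  | succ b ih =>
    have key : ∫ y : ℝ, P.eval y * (-((Hr (b+1)).eval y * gg y))
        = - ∫ y : ℝ, (derivative P).eval y * ((Hr b).eval y * gg y) := by
      apply MeasureTheory.integral_mul_deriv_eq_deriv_mul_of_integrable
        (u := fun y => P.eval y) (v := fun y => (Hr b).eval y * gg y)
      · exact fun y _ => Polynomial.hasDerivAt P y
      · exact fun y _ => hasDerivAt_Hgg b y
      · have : ((fun y : ℝ => P.eval y) * fun y => -((Hr (b+1)).eval y * gg y))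
            = fun y : ℝ => -(P.eval y * ((Hr (b+1)).eval y * gg y)) := by
          funext y; simp only [Pi.mul_apply]; ring
        rw [this]; exact (integrable_P_Hgg P (b+1)).neg
      · exact integrable_P_Hgg (derivative P) b
      · exact integrable_P_Hgg P b
    have h2 : ∫ y : ℝ, P.eval y * ((Hr (b+1)).eval y * gg y)
        = ∫ y : ℝ, (derivative P).eval y * ((Hr b).eval y * gg y) := by
      calc ∫ y : ℝ, P.eval y * ((Hr (b+1)).eval y * gg y)
          = ∫ y : ℝ, -(P.eval y * -((Hr (b+1)).eval y * gg y)) := by congr 1; funext y; ring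
        _ = _ := by rw [integral_neg, key, neg_neg]
    rw [h2, ih (derivative P), Function.iterate_succ_apply]

theorem integral_gg : ∫ y : ℝ, gg y = Real.sqrt (2*π) := by
  have := integral_gaussian (1/2 : ℝ)
  simp only [gauss_eq] at this
  rw [this]
  congr 1
  ring

theorem integral_Hr_gg (j : ℕ) (hj : j ≠ 0) : ∫ y : ℝ, (Hr j).eval y * gg y = 0 := by
  have h := ibp_hermite j 1
  simp only [Polynomial.eval_one, one_mul] at h
  rw [h]
  obtain ⟨i, rfl⟩ := Nat.exists_eq_succ_of_ne_zero hj
  rw [Function.iterate_succ_apply]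
  simp

theorem integral_Hr_mul_gg (a b : ℕ) :
    ∫ y : ℝ, (Hr a).eval y * ((Hr b).eval y * gg y)
      = if a = b then (a.factorial : ℝ) * Real.sqrt (2*π) else 0 := by
  rw [ibp_hermite b (Hr a), iter_deriv_Hr]
  by_cases hab : a = b
  · subst hab
    simp only [Nat.descFactorial_self, Nat.sub_self, if_true]
    have h0 : Hr 0 = 1 := by unfold Hr; simp [Polynomial.hermite_zero]
    rw [h0]
    simp only [eval_mul, eval_C, eval_one, mul_one]
    rw [MeasureTheory.integral_const_mul, integral_gg]
  · rw [if_neg hab]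
    rcases lt_or_gt_of_ne hab with h | h
    · rw [Nat.descFactorial_eq_zero_iff_lt.mpr h]
      simp
    · simp only [eval_mul, eval_C, mul_assoc]
      rw [MeasureTheory.integral_const_mul, integral_Hr_gg (a-b) (by omega), mul_zero]

theorem integrable_fh_mul (a b : ℕ) : Integrable (fun x : ℝ => fh a x * fh b x) := by
  have hE : ∀ x : ℝ, Real.exp (-π*x^2) * Real.exp (-π*x^2) = Real.exp (-(2*π)*x^2) := by
    intro x; rw [← Real.exp_add]; ring_nf
  have : (fun x : ℝ => fh a x * fh b x)
      = fun x => (Hr a * Hr b).eval (2*Real.sqrt π*x) * Real.exp (-(2*π)*x^2) := by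
    funext x
    unfold fh
    rw [eval_mul]
    linear_combination ((Hr a).eval (2*Real.sqrt π*x) * (Hr b).eval (2*Real.sqrt π*x)) * hE x
  rw [this]
  exact integrable_poly_gauss' _ _ (by positivity)

theorem integral_fh_mul (a b : ℕ) :
    ∫ x : ℝ, fh a x * fh b x
      = if a = b then (a.factorial : ℝ) * Real.sqrt 2 / 2 else 0 := by
  have hsπ : Real.sqrt π > 0 := Real.sqrt_pos.mpr Real.pi_pos
  have hE : ∀ x : ℝ, fh a x * fh b x
      = (Hr a).eval (2*Real.sqrt π*x) * ((Hr b).eval (2*Real.sqrt π*x) * gg (2*Real.sqrt π*x)) := by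
    intro x
    unfold fh gg
    have h0 : Real.sqrt π * Real.sqrt π = π := Real.mul_self_sqrt (le_of_lt Real.pi_pos)
    have : -(1/2:ℝ) * (2*Real.sqrt π*x)^2 = -π*x^2 + -π*x^2 := by
      nlinarith [h0]
    rw [this, Real.exp_add]
    ring
  have hcomp : ∫ x : ℝ, fh a x * fh b x
      = |(2*Real.sqrt π)⁻¹| • ∫ y : ℝ, (Hr a).eval y * ((Hr b).eval y * gg y) := by
    rw [← MeasureTheory.Measure.integral_comp_mul_left
      (fun y => (Hr a).eval y * ((Hr b).eval y * gg y)) (2*Real.sqrt π)]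
    congr 1; funext x; exact hE x
  rw [hcomp, integral_Hr_mul_gg]
  have habs : |(2*Real.sqrt π)⁻¹| = (2*Real.sqrt π)⁻¹ := abs_of_pos (by positivity)
  rw [habs]
  by_cases hab : a = b
  · rw [if_pos hab, if_pos hab]
    have h2π : Real.sqrt (2*π) = Real.sqrt 2 * Real.sqrt π :=
      Real.sqrt_mul (by norm_num) π
    rw [h2π, smul_eq_mul]
    field_simp
  · rw [if_neg hab, if_neg hab, smul_zero]

/-! W expansion -/

theorem deriv_h2 (N : ℕ) :
    deriv (h2 N) = fun t => cc N *
      (Real.sqrt π * (((2*N:ℕ):ℝ) * fh (2*N-1) t - fh (2*N+1) t)) := by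
  have hfun : h2 N = fun x => cc N * fh (2*N) x := funext (h2_eq N)
  rw [hfun]
  funext t
  exact (((hasDerivAt_fh (2*N) t).const_mul (cc N))).deriv

theorem W_h2_gen (lam : ℝ) (N : ℕ) (q : ℝ) :
    W lam (h2 N) q =
      -((-(2*q)) * (cc N * (Real.sqrt π * (((2*N:ℕ):ℝ) * fh (2*N-1) q - fh (2*N+1) q)))
        + (lam^2 - q^2) * (cc N * (π * (((2*N:ℕ):ℝ)*(((2*N:ℕ):ℝ)-1) * fh (2*N-2) q
            - (2*((2*N:ℕ):ℝ)+1) * fh (2*N) q + fh (2*N+2) q))))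
      + (2*π*lam*q)^2 * (cc N * fh (2*N) q) := by
  unfold W
  rw [h2_eq]
  congr 1
  congr 1
  rw [deriv_h2 N]
  have hA : HasDerivAt (fun t : ℝ => lam^2 - t^2) (-(2*q)) q := by
    simpa using ((hasDerivAt_pow 2 q).const_sub (lam^2))
  have hB := (hasDerivAt_fh2 (2*N) q).const_mul (cc N)
  exact (hA.mul hB).deriv

theorem W_h2_zero (lam q : ℝ) :
    W lam (h2 0) q = cc 0 * ((1/4) * fh 4 q + (2*π*lam^2 - 3/4) * fh 0 q) := by
  have h := W_h2_gen lam 0 q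
  norm_num at h
  rw [h]
  have e1 := x_mul_fh 1 q
  have e4 := x2_mul_fh 0 q
  have e5 := x2_mul_fh 2 q
  norm_num at e1 e4 e5
  linear_combination (-(cc 0)) * e1 + (cc 0*π*lam^2 - cc 0/4) * e4 + (cc 0/4) * e5

theorem W_h2_succ (lam : ℝ) (K : ℕ) (q : ℝ) :
    W lam (h2 (K+1)) q = cc (K+1) *
      ((1/4) * fh (2*K+6) q
        + (2*π*lam^2*(4*(K:ℝ)+5)
            - (2*(2*(K:ℝ)+2)^2+2*(2*(K:ℝ)+2)+3)/4) * fh (2*K+2) q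
        + ((2*(K:ℝ)+2)*(2*(K:ℝ)+1)*(2*(K:ℝ))*(2*(K:ℝ)-1)/4) * fh (2*K-2) q) := by
  have h := W_h2_gen lam (K+1) q
  simp only [show 2*(K+1) = 2*K+2 from by ring, show 2*K+2-1 = 2*K+1 from by omega,
    show 2*K+2-2 = 2*K from by omega, show 2*K+2+1 = 2*K+3 from by omega,
    show 2*K+2+2 = 2*K+4 from by omega] at h
  rw [h]
  have e1 := x_mul_fh (2*K+1) q
  have e2 := x_mul_fh (2*K+3) q
  have e3 := x2_mul_fh (2*K) q
  have e4 := x2_mul_fh (2*K+2) q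
  have e5 := x2_mul_fh (2*K+4) q
  simp only [show 2*K+1-1 = 2*K from by omega, show 2*K+3-1 = 2*K+2 from by omega,
    show 2*K+2-2 = 2*K from by omega, show 2*K+4-2 = 2*K+2 from by omega,
    show 2*K+1+1 = 2*K+2 from by omega, show 2*K+3+1 = 2*K+4 from by omega,
    show 2*K+2+2 = 2*K+4 from by omega, show 2*K+4+2 = 2*K+6 from by omega,
    show 2*K+0+2 = 2*K+2 from by omega] at e1 e2 e3 e4 e5
  push_cast at e1 e2 e3 e4 e5 ⊢
  linear_combination (cc (K+1)*(2*(K:ℝ)+2)) * e1 - cc (K+1) * e2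
    + (cc (K+1)*(2*(K:ℝ)+2)*(2*(K:ℝ)+1)/4) * e3
    + (cc (K+1)*π*lam^2 - cc (K+1)*(2*(2*(K:ℝ)+2)+1)/4) * e4
    + (cc (K+1)/4) * e5

/-! scalar constants -/

theorem uu : (2:ℝ)^((1:ℝ)/4) * (2:ℝ)^((1:ℝ)/4) = Real.sqrt 2 := by
  rw [← Real.rpow_add (by norm_num), Real.sqrt_eq_rpow]
  norm_num

theorem diag_const (N : ℕ) :
    cc N * cc N * (((2*N).factorial : ℝ) * Real.sqrt 2 / 2) = 1 := by
  unfold cc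
  have hF : (0:ℝ) < ((2*N).factorial : ℝ) := by exact_mod_cast (2*N).factorial_pos
  have hS : Real.sqrt ((2*N).factorial) * Real.sqrt ((2*N).factorial) = ((2*N).factorial:ℝ) :=
    Real.mul_self_sqrt hF.le
  have h2 : Real.sqrt 2 * Real.sqrt 2 = 2 := Real.mul_self_sqrt (by norm_num)
  have hSpos : (0:ℝ) < Real.sqrt ((2*N).factorial) := Real.sqrt_pos.mpr hF
  field_simp
  linear_combination (((2*N).factorial : ℝ) * Real.sqrt 2) * uu + (((2*N).factorial : ℝ)) * h2 + (-2) * hS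

theorem offdiag_const (N : ℕ) :
    cc N * cc (N+2) * (((2*N+4).factorial : ℝ) * Real.sqrt 2 / 2)
      = Real.sqrt ((2*(N:ℝ)+1)*(2*(N:ℝ)+2)*(2*(N:ℝ)+3)*(2*(N:ℝ)+4)) := by
  unfold cc
  simp only [show 2*(N+2) = 2*N+4 from by ring]
  have hF : (0:ℝ) < ((2*N).factorial : ℝ) := by exact_mod_cast (2*N).factorial_pos
  have hP : (0:ℝ) < (2*(N:ℝ)+1)*(2*(N:ℝ)+2)*(2*(N:ℝ)+3)*(2*(N:ℝ)+4) := by positivity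
  have hFP : ((2*N+4).factorial : ℝ)
      = ((2*N).factorial : ℝ) * ((2*(N:ℝ)+1)*(2*(N:ℝ)+2)*(2*(N:ℝ)+3)*(2*(N:ℝ)+4)) := by
    have : (2*N+4).factorial
        = (2*N+4) * ((2*N+3) * ((2*N+2) * ((2*N+1) * (2*N).factorial))) := by
      rw [show 2*N+4 = (2*N+3)+1 from rfl, Nat.factorial_succ,
        show 2*N+3 = (2*N+2)+1 from rfl, Nat.factorial_succ,
        show 2*N+2 = (2*N+1)+1 from rfl, Nat.factorial_succ,
        show 2*N+1 = (2*N)+1 from rfl, Nat.factorial_succ]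
    rw [this]
    push_cast
    ring
  rw [hFP, Real.sqrt_mul hF.le]
  have hS : Real.sqrt ((2*N).factorial) * Real.sqrt ((2*N).factorial) = ((2*N).factorial:ℝ) :=
    Real.mul_self_sqrt hF.le
  have h2 : Real.sqrt 2 * Real.sqrt 2 = 2 := Real.mul_self_sqrt (by norm_num)
  have hSpos : (0:ℝ) < Real.sqrt ((2*N).factorial) := Real.sqrt_pos.mpr hF
  have hQpos : (0:ℝ) < Real.sqrt ((2*(N:ℝ)+1)*(2*(N:ℝ)+2)*(2*(N:ℝ)+3)*(2*(N:ℝ)+4)) :=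
    Real.sqrt_pos.mpr hP
  have ha : Real.sqrt (2*(N:ℝ)+1) * Real.sqrt (2*(N:ℝ)+1) = 2*(N:ℝ)+1 :=
    Real.mul_self_sqrt (by positivity)
  have hb : Real.sqrt (2*(N:ℝ)+2) * Real.sqrt (2*(N:ℝ)+2) = 2*(N:ℝ)+2 :=
    Real.mul_self_sqrt (by positivity)
  have hc : Real.sqrt (2*(N:ℝ)+3) * Real.sqrt (2*(N:ℝ)+3) = 2*(N:ℝ)+3 :=
    Real.mul_self_sqrt (by positivity)
  have hd : Real.sqrt (2*(N:ℝ)+4) * Real.sqrt (2*(N:ℝ)+4) = 2*(N:ℝ)+4 :=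
    Real.mul_self_sqrt (by positivity)
  have hPs : Real.sqrt ((2*(N:ℝ)+1)*(2*(N:ℝ)+2)*(2*(N:ℝ)+3)*(2*(N:ℝ)+4))
      * Real.sqrt ((2*(N:ℝ)+1)*(2*(N:ℝ)+2)*(2*(N:ℝ)+3)*(2*(N:ℝ)+4))
      = (2*(N:ℝ)+1)*(2*(N:ℝ)+2)*(2*(N:ℝ)+3)*(2*(N:ℝ)+4) := Real.mul_self_sqrt hP.le
  rw [div_mul_div_comm, uu, div_mul_eq_mul_div, div_eq_iff (by positivity)]
  linear_combination (((2*N).factorial:ℝ) * ((2*(N:ℝ)+1)*(2*(N:ℝ)+2)*(2*(N:ℝ)+3)*(2*(N:ℝ)+4)) / 2) * h2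
    - (Real.sqrt ((2*(N:ℝ)+1)*(2*(N:ℝ)+2)*(2*(N:ℝ)+3)*(2*(N:ℝ)+4)))^2 * hS
    - ((2*N).factorial:ℝ) * hPs

/-! integral splitting -/

theorem integral_three (a b c : ℝ) (i1 i2 i3 i4 : ℕ) :
    ∫ x : ℝ, (a * (fh i1 x * fh i4 x) + b * (fh i2 x * fh i4 x) + c * (fh i3 x * fh i4 x))
      = a * (∫ x : ℝ, fh i1 x * fh i4 x) + b * (∫ x : ℝ, fh i2 x * fh i4 x)
        + c * (∫ x : ℝ, fh i3 x * fh i4 x) := by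
  have h1 : Integrable (fun x : ℝ => a * (fh i1 x * fh i4 x)) := (integrable_fh_mul i1 i4).const_mul a
  have h2 : Integrable (fun x : ℝ => b * (fh i2 x * fh i4 x)) := (integrable_fh_mul i2 i4).const_mul b
  have h3 : Integrable (fun x : ℝ => c * (fh i3 x * fh i4 x)) := (integrable_fh_mul i3 i4).const_mul c
  have h12 : Integrable (fun x : ℝ => a * (fh i1 x * fh i4 x) + b * (fh i2 x * fh i4 x)) :=
    h1.add h2
  rw [MeasureTheory.integral_add h12 h3, MeasureTheory.integral_add h1 h2,
    MeasureTheory.integral_const_mul, MeasureTheory.integral_const_mul,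
    MeasureTheory.integral_const_mul]

theorem integral_two (a b : ℝ) (i1 i2 i4 : ℕ) :
    ∫ x : ℝ, (a * (fh i1 x * fh i4 x) + b * (fh i2 x * fh i4 x))
      = a * (∫ x : ℝ, fh i1 x * fh i4 x) + b * (∫ x : ℝ, fh i2 x * fh i4 x) := by
  have h1 : Integrable (fun x : ℝ => a * (fh i1 x * fh i4 x)) := (integrable_fh_mul i1 i4).const_mul a
  have h2 : Integrable (fun x : ℝ => b * (fh i2 x * fh i4 x)) := (integrable_fh_mul i2 i4).const_mul b
  rw [MeasureTheory.integral_add h1 h2,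
    MeasureTheory.integral_const_mul, MeasureTheory.integral_const_mul]

end Aux2

section Main
open Real

/-- Jacobi matrix coefficients of the prolate operator on the even
eigenspace of the Fourier transform. -/
theorem stmt6 (lam : ℝ) (hlam : 0 < lam) (n : ℕ) :
    (∫ x : ℝ, W lam (h2 (2 * n)) x * h2 (2 * n + 2) x)
        = (1 / 4) * Real.sqrt ((4 * (n : ℝ) + 1) * (4 * (n : ℝ) + 2) *
            (4 * (n : ℝ) + 3) * (4 * (n : ℝ) + 4))
    ∧ (∫ x : ℝ, W lam (h2 (2 * n)) x * h2 (2 * n) x)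
        = -8 * (n : ℝ) ^ 2 - 2 * (n : ℝ) - 3 / 4 + 2 * Real.pi * lam ^ 2 * (8 * (n : ℝ) + 1) := by
  cases n with
  | zero =>
    constructor
    · have hfun : (fun x : ℝ => W lam (h2 (2*0)) x * h2 (2*0+2) x)
          = fun x => (cc 0 * cc 2 * (1/4)) * (fh 4 x * fh 4 x)
              + (cc 0 * cc 2 * (2*π*lam^2 - 3/4)) * (fh 0 x * fh 4 x) := by
        funext x
        rw [show (2*0 : ℕ) = 0 from rfl, show (2*0+2 : ℕ) = 2 from rfl,
          W_h2_zero, h2_eq 2 x, show (2*2 : ℕ) = 4 from rfl]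
        ring
      rw [hfun, integral_two, integral_fh_mul, integral_fh_mul]
      norm_num
      have h := offdiag_const 0
      norm_num at h
      linear_combination (1/4) * h
    · have hfun : (fun x : ℝ => W lam (h2 (2*0)) x * h2 (2*0) x)
          = fun x => (cc 0 * cc 0 * (1/4)) * (fh 4 x * fh 0 x)
              + (cc 0 * cc 0 * (2*π*lam^2 - 3/4)) * (fh 0 x * fh 0 x) := by
        funext x
        rw [show (2*0 : ℕ) = 0 from rfl, W_h2_zero, h2_eq 0 x, show (2*0 : ℕ) = 0 from rfl]
        ring
      rw [hfun, integral_two, integral_fh_mul, integral_fh_mul]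
      norm_num
      have h := diag_const 0
      norm_num at h
      linear_combination (2*π*lam^2 - 3/4) * h
  | succ j =>
    have hK : (2*(j+1) : ℕ) = (2*j+1)+1 := by ring
    constructor
    · have hfun : (fun x : ℝ => W lam (h2 (2*(j+1))) x * h2 (2*(j+1)+2) x)
          = fun x => (cc (2*j+2) * cc (2*j+4) * (1/4)) * (fh (4*j+8) x * fh (4*j+8) x)
              + (cc (2*j+2) * cc (2*j+4) * (2*π*lam^2*(4*((2*j+1:ℕ):ℝ)+5)
                  - (2*(2*((2*j+1:ℕ):ℝ)+2)^2+2*(2*((2*j+1:ℕ):ℝ)+2)+3)/4))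
                  * (fh (4*j+4) x * fh (4*j+8) x)
              + (cc (2*j+2) * cc (2*j+4) * ((2*((2*j+1:ℕ):ℝ)+2)*(2*((2*j+1:ℕ):ℝ)+1)
                  *(2*((2*j+1:ℕ):ℝ))*(2*((2*j+1:ℕ):ℝ)-1)/4)) * (fh (4*j) x * fh (4*j+8) x) := by
        funext x
        rw [hK, W_h2_succ lam (2*j+1) x, h2_eq ((2*j+1)+1+2) x]
        simp only [show 2*(2*j+1)+6 = 4*j+8 from by omega, show 2*(2*j+1)+2 = 4*j+4 from by omega,
          show 2*(2*j+1)-2 = 4*j from by omega, show (2*j+1)+1 = 2*j+2 from by omega,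
          show 2*j+2+2 = 2*j+4 from by omega, show 2*(2*j+4) = 4*j+8 from by omega]
        ring
      rw [hfun, integral_three, integral_fh_mul, integral_fh_mul, integral_fh_mul,
        if_pos rfl, if_neg (by omega : ¬ (4*j+4 = 4*j+8)), if_neg (by omega : ¬ (4*j = 4*j+8))]
      have h := offdiag_const (2*j+2)
      simp only [show 2*(2*j+2)+4 = 4*j+8 from by omega,
        show 2*j+2+2 = 2*j+4 from by omega] at h
      push_cast at h ⊢
      ring_nf at h ⊢
      linear_combination (1/4) * h
    · have hfun : (fun x : ℝ => W lam (h2 (2*(j+1))) x * h2 (2*(j+1)) x)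
          = fun x => (cc (2*j+2) * cc (2*j+2) * (1/4)) * (fh (4*j+8) x * fh (4*j+4) x)
              + (cc (2*j+2) * cc (2*j+2) * (2*π*lam^2*(4*((2*j+1:ℕ):ℝ)+5)
                  - (2*(2*((2*j+1:ℕ):ℝ)+2)^2+2*(2*((2*j+1:ℕ):ℝ)+2)+3)/4))
                  * (fh (4*j+4) x * fh (4*j+4) x)
              + (cc (2*j+2) * cc (2*j+2) * ((2*((2*j+1:ℕ):ℝ)+2)*(2*((2*j+1:ℕ):ℝ)+1)
                  *(2*((2*j+1:ℕ):ℝ))*(2*((2*j+1:ℕ):ℝ)-1)/4)) * (fh (4*j) x * fh (4*j+4) x) := by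
        funext x
        rw [hK, W_h2_succ lam (2*j+1) x, h2_eq ((2*j+1)+1) x]
        simp only [show 2*(2*j+1)+6 = 4*j+8 from by omega, show 2*(2*j+1)+2 = 4*j+4 from by omega,
          show 2*(2*j+1)-2 = 4*j from by omega, show (2*j+1)+1 = 2*j+2 from by omega,
          show 2*(2*j+2) = 4*j+4 from by omega]
        ring
      rw [hfun, integral_three, integral_fh_mul, integral_fh_mul, integral_fh_mul,
        if_neg (by omega : ¬ (4*j+8 = 4*j+4)), if_pos rfl, if_neg (by omega : ¬ (4*j = 4*j+4))]
      have h := diag_const (2*j+2)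
      simp only [show 2*(2*j+2) = 4*j+4 from by omega] at h
      push_cast at h ⊢
      linear_combination (2*π*lam^2*(4*(2*(j:ℝ)+1)+5)
        - (2*(2*(2*(j:ℝ)+1)+2)^2+2*(2*(2*(j:ℝ)+1)+2)+3)/4) * h

end Main
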